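/- Let α < 1 and let z : [0,∞) → ℝ be a continuous function with z(0) = 0. Then the equation y(t) = y₀ + z(t) + α · max_{0≤s≤t} y(s) has the unique continuous solution y(t) = y₀/(1−α) + z(t) + (α/(1−α)) · max_{0≤s≤t} z(s). -/

import Mathlib

open Set

private lemma sup_attained' {g : ℝ → ℝ} (hg : Continuous g) {t : ℝ} (ht : 0 ≤ t) :
    ∃ s ∈ Icc (0:ℝ) t, g s = sSup (g '' Icc 0 t) := by
  have h := (isCompact_Icc.image hg).sSup_mem (((nonempty_Icc).mpr ht).image g)
  obtain ⟨s, hs, hgs⟩ := h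
  exact ⟨s, hs, hgs⟩

private lemma le_sup' {g : ℝ → ℝ} (hg : Continuous g) {s t : ℝ} (hs : s ∈ Icc (0:ℝ) t) :
    g s ≤ sSup (g '' Icc 0 t) :=
  le_csSup (isCompact_Icc.image hg).bddAbove (mem_image_of_mem g hs)

private lemma sup_mono' {g : ℝ → ℝ} (hg : Continuous g) {t₁ t₂ : ℝ}
    (h0 : 0 ≤ t₁) (h : t₁ ≤ t₂) :
    sSup (g '' Icc 0 t₁) ≤ sSup (g '' Icc 0 t₂) :=
  csSup_le_csSup (isCompact_Icc.image hg).bddAbove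
    ((nonempty_Icc.mpr h0).image g) (by rintro x ⟨s, hs, rfl⟩; exact mem_image_of_mem g (Icc_subset_Icc le_rfl h hs))

/-- Let α < 1 and z : [0,∞) → ℝ continuous with z 0 = 0. The equation
y(t) = y₀ + z(t) + α · max_{0≤s≤t} y(s) has the unique continuous solution
y(t) = y₀/(1−α) + z(t) + (α/(1−α)) · max_{0≤s≤t} z(s). -/
theorem perturbed_equation_explicit_solution (α y₀ : ℝ) (hα : α < 1)
    (z : ℝ → ℝ) (hz : Continuous z) (hz0 : z 0 = 0) :
    (∀ t : ℝ, 0 ≤ t →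
      (fun t => y₀ / (1 - α) + z t + α / (1 - α) * sSup (z '' Icc 0 t)) t
        = y₀ + z t
          + α * sSup ((fun t => y₀ / (1 - α) + z t + α / (1 - α) * sSup (z '' Icc 0 t))
              '' Icc 0 t)) ∧
    (∀ y : ℝ → ℝ, Continuous y →
      (∀ t : ℝ, 0 ≤ t → y t = y₀ + z t + α * sSup (y '' Icc 0 t)) →
      ∀ t : ℝ, 0 ≤ t →
        y t = y₀ / (1 - α) + z t + α / (1 - α) * sSup (z '' Icc 0 t)) := by
  have h1 : (0:ℝ) < 1 - α := by linarith
  have h1' : (1:ℝ) - α ≠ 0 := ne_of_gt h1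
  constructor
  · -- existence
    intro t ht
    simp only
    set Y : ℝ → ℝ := fun t => y₀ / (1 - α) + z t + α / (1 - α) * sSup (z '' Icc 0 t)
      with hY
    set Mt : ℝ := sSup (z '' Icc 0 t) with hMt
    set C : ℝ := y₀ / (1 - α) + Mt + α / (1 - α) * Mt with hC
    -- pointwise bound
    have bound : ∀ s ∈ Icc (0:ℝ) t, Y s ≤ C := by
      intro s hs
      have hzs : z s ≤ sSup (z '' Icc 0 s) := le_sup' hz (mem_Icc.mpr ⟨hs.1, le_rfl⟩)
      have hMs : sSup (z '' Icc 0 s) ≤ Mt := sup_mono' hz hs.1 hs.2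
      have key : (1 - α) * (z s + α / (1 - α) * sSup (z '' Icc 0 s))
          ≤ (1 - α) * (Mt + α / (1 - α) * Mt) := by
        have e : ∀ x w : ℝ, (1 - α) * (x + α / (1 - α) * w) = (1 - α) * x + α * w := by
          intro x w; field_simp
        rw [e, e]
        have p : (1 - α) * z s ≤ (1 - α) * sSup (z '' Icc 0 s) :=
          mul_le_mul_of_nonneg_left hzs h1.le
        linarith
      have := le_of_mul_le_mul_left key h1
      simp only [hY, hC]
      linarith
    have hne : (Y '' Icc 0 t).Nonempty := (nonempty_Icc.mpr ht).image Y
    have hbdd : BddAbove (Y '' Icc 0 t) := by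
      refine ⟨C, ?_⟩
      rintro x ⟨s, hs, rfl⟩
      exact bound s hs
    have hle : sSup (Y '' Icc 0 t) ≤ C := csSup_le hne (by rintro x ⟨s, hs, rfl⟩; exact bound s hs)
    have hge : C ≤ sSup (Y '' Icc 0 t) := by
      obtain ⟨s₁, hs₁, hzs₁⟩ := sup_attained' hz ht
      have hMs₁ : sSup (z '' Icc 0 s₁) = Mt := by
        refine le_antisymm (sup_mono' hz hs₁.1 hs₁.2) ?_
        rw [hMt, ← hzs₁]
        exact le_sup' hz (mem_Icc.mpr ⟨hs₁.1, le_rfl⟩)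
      have : Y s₁ = C := by simp only [hY, hC, hMs₁, hzs₁]; rw [← hMt]
      calc C = Y s₁ := this.symm
        _ ≤ sSup (Y '' Icc 0 t) := le_csSup hbdd (mem_image_of_mem Y hs₁)
    have hsup : sSup (Y '' Icc 0 t) = C := le_antisymm hle hge
    rw [hsup, hC, hMt]
    field_simp
    ring
  · -- uniqueness
    intro y hy heq t ht
    set Ft : ℝ := sSup (y '' Icc 0 t) with hFt
    set Mt : ℝ := sSup (z '' Icc 0 t) with hMt
    -- upper bound: (1-α) Ft ≤ y₀ + Mt
    have hub : (1 - α) * Ft ≤ y₀ + Mt := by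
      obtain ⟨s₀, hs₀, hys₀⟩ := sup_attained' hy ht
      have hF₀ : sSup (y '' Icc 0 s₀) = Ft := by
        refine le_antisymm (sup_mono' hy hs₀.1 hs₀.2) ?_
        rw [hFt, ← hys₀]
        exact le_sup' hy (mem_Icc.mpr ⟨hs₀.1, le_rfl⟩)
      have he := heq s₀ hs₀.1
      rw [hF₀, hys₀] at he
      have hzle : z s₀ ≤ Mt := le_sup' hz hs₀
      linarith
    -- lower bound
    have hlb : y₀ + Mt ≤ (1 - α) * Ft := by
      obtain ⟨s₁, hs₁, hzs₁⟩ := sup_attained' hz ht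
      have he := heq s₁ hs₁.1
      have hyle : y s₁ ≤ sSup (y '' Icc 0 s₁) := le_sup' hy (mem_Icc.mpr ⟨hs₁.1, le_rfl⟩)
      have hFle : sSup (y '' Icc 0 s₁) ≤ Ft := sup_mono' hy hs₁.1 hs₁.2
      have p : (1 - α) * sSup (y '' Icc 0 s₁) ≤ (1 - α) * Ft :=
        mul_le_mul_of_nonneg_left hFle h1.le
      rw [hzs₁] at he
      linarith
    have hFval : Ft = (y₀ + Mt) / (1 - α) := by
      field_simp
      linarith
    have hyt := heq t ht
    rw [← hFt, hFval] at hyt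
    rw [hyt]
    field_simp
    ring
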